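/- A finite poset is a p-morphic image of an n-comb for some n if and only if it is a broken m-comb for some m. -/

import Mathlib

/-! # Common framework: superintuitionistic logics, Kripke frames and models -/

/-! ## Intuitionistic propositional formulas -/

inductive Form : Type
  | var : ℕ → Form
  | bot : Form
  | top : Form
  | and : Form → Form → Form
  | or  : Form → Form → Form
  | imp : Form → Form → Form
deriving DecidableEq

namespace Form

/-- Implication depth of a formula. -/
def depth : Form → ℕ
  | var _ => 0
  | bot => 0
  | top => 0
  | and φ ψ => max φ.depth ψ.depth
  | or φ ψ => max φ.depth ψ.depth
  | imp φ ψ => max φ.depth ψ.depth + 1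

/-- All propositional variables of the formula are among `p_0, …, p_{m-1}`. -/
def varsLt (m : ℕ) : Form → Prop
  | var p => p < m
  | bot => True
  | top => True
  | and φ ψ => φ.varsLt m ∧ ψ.varsLt m
  | or φ ψ => φ.varsLt m ∧ ψ.varsLt m
  | imp φ ψ => φ.varsLt m ∧ ψ.varsLt m

/-- Uniform substitution. -/
def subst (σ : ℕ → Form) : Form → Form
  | var p => σ p
  | bot => bot
  | top => top
  | and φ ψ => and (φ.subst σ) (ψ.subst σ)
  | or φ ψ => or (φ.subst σ) (ψ.subst σ)
  | imp φ ψ => imp (φ.subst σ) (ψ.subst σ)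

/-- Biconditional. -/
def iff (φ ψ : Form) : Form := and (imp φ ψ) (imp ψ φ)

/-- Negation. -/
def neg (φ : Form) : Form := imp φ bot

end Form

/-! ## IPC and superintuitionistic logics -/

/-- A Hilbert-style axiomatization of intuitionistic propositional logic. -/
inductive IPC : Form → Prop
  | ax1 (φ ψ : Form) : IPC (.imp φ (.imp ψ φ))
  | ax2 (φ ψ χ : Form) :
      IPC (.imp (.imp φ (.imp ψ χ)) (.imp (.imp φ ψ) (.imp φ χ)))
  | andE1 (φ ψ : Form) : IPC (.imp (.and φ ψ) φ)
  | andE2 (φ ψ : Form) : IPC (.imp (.and φ ψ) ψ)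
  | andI (φ ψ : Form) : IPC (.imp φ (.imp ψ (.and φ ψ)))
  | orI1 (φ ψ : Form) : IPC (.imp φ (.or φ ψ))
  | orI2 (φ ψ : Form) : IPC (.imp ψ (.or φ ψ))
  | orE (φ ψ χ : Form) :
      IPC (.imp (.imp φ χ) (.imp (.imp ψ χ) (.imp (.or φ ψ) χ)))
  | botE (φ : Form) : IPC (.imp .bot φ)
  | topI : IPC .top
  | mp (φ ψ : Form) : IPC (.imp φ ψ) → IPC φ → IPC ψ

/-- The set of theorems of IPC. -/
def IPCSet : Set Form := {φ | IPC φ}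

/-- A superintuitionistic logic: a set of formulas containing all theorems of
IPC, closed under modus ponens and uniform substitution. -/
def IsSILogic (L : Set Form) : Prop :=
  IPCSet ⊆ L ∧
  (∀ φ ψ : Form, Form.imp φ ψ ∈ L → φ ∈ L → ψ ∈ L) ∧
  (∀ (φ : Form) (σ : ℕ → Form), φ ∈ L → φ.subst σ ∈ L)

/-- `oplus L Γ` is the least superintuitionistic logic containing `L` and `Γ`
(written `L ⊕ Γ`). -/
def oplus (L Γ : Set Form) : Set Form :=
  ⋂₀ {M : Set Form | IsSILogic M ∧ L ⊆ M ∧ Γ ⊆ M}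

/-- A logic is `n`-uniform if every formula is provably equivalent in it to a
formula of implication depth at most `n`. -/
def Uniform (L : Set Form) (n : ℕ) : Prop :=
  ∀ φ : Form, ∃ ψ : Form, ψ.depth ≤ n ∧ Form.iff φ ψ ∈ L

/-- A logic is locally tabular if over each finite tuple of variables there are
only finitely many formulas up to provable equivalence. -/
def LocallyTabular (L : Set Form) : Prop :=
  ∀ m : ℕ, ∃ Φ : Finset Form, ∀ φ : Form, φ.varsLt m → ∃ ψ ∈ Φ, Form.iff φ ψ ∈ L

/-! ## Kripke frames (posets) -/

structure Frame : Type 1 where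
  W : Type
  le : W → W → Prop
  refl : ∀ x, le x x
  trans : ∀ x y z, le x y → le y z → le x z
  antisymm : ∀ x y, le x y → le y x → x = y

namespace Frame

def lt (F : Frame) (a b : F.W) : Prop := F.le a b ∧ a ≠ b

/-- A valuation is persistent if it is preserved upwards. -/
def Persistent (F : Frame) (V : ℕ → F.W → Prop) : Prop :=
  ∀ p a b, F.le a b → V p a → V p b

/-- Kripke forcing. -/
def force (F : Frame) (V : ℕ → F.W → Prop) : Form → F.W → Prop
  | .var p, w => V p w
  | .bot, _ => False
  | .top, _ => True
  | .and φ ψ, w => F.force V φ w ∧ F.force V ψ w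
  | .or φ ψ, w => F.force V φ w ∨ F.force V ψ w
  | .imp φ ψ, w => ∀ v, F.le w v → F.force V φ v → F.force V ψ v

/-- `F ⊩ φ`. -/
def Valid (F : Frame) (φ : Form) : Prop :=
  ∀ V : ℕ → F.W → Prop, F.Persistent V → ∀ w : F.W, F.force V φ w

def Rooted (F : Frame) : Prop := ∃ r, ∀ w, F.le r w

/-- The subposet on a subset of the carrier. -/
def restrict (F : Frame) (s : Set F.W) : Frame where
  W := s
  le a b := F.le a.1 b.1
  refl a := F.refl a.1
  trans a b c h1 h2 := F.trans a.1 b.1 c.1 h1 h2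
  antisymm a b h1 h2 := Subtype.ext (F.antisymm a.1 b.1 h1 h2)

/-- The rooted upset `↑z`. -/
def up (F : Frame) (z : F.W) : Frame := F.restrict {w | F.le z w}

/-- There is a chain of `d` elements in `↑w` starting at `w`. -/
def hasChainUp (F : Frame) (w : F.W) (d : ℕ) : Prop :=
  ∃ f : Fin d → F.W, (∀ i : Fin d, (i : ℕ) = 0 → f i = w) ∧
    (∀ i j : Fin d, (i : ℕ) < (j : ℕ) → F.lt (f i) (f j))

/-- The depth of `w` is `d`: the longest chain in `↑w` has exactly `d` elements. -/
def depthEq (F : Frame) (w : F.W) (d : ℕ) : Prop :=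
  F.hasChainUp w d ∧ ¬ F.hasChainUp w (d + 1)

/-- The covering relation of the poset. -/
def covBy (F : Frame) (a b : F.W) : Prop :=
  F.lt a b ∧ ∀ c, F.lt a c → F.lt c b → False

end Frame

/-- A p-morphism of posets. -/
def IsPMorphism (P Q : Frame) (f : P.W → Q.W) : Prop :=
  (∀ a b, P.le a b → Q.le (f a) (f b)) ∧
  (∀ a b, Q.le (f a) b → ∃ a', P.le a a' ∧ f a' = b)

/-- `Q` is a p-morphic image of `P`. -/
def PMorphicImage (P Q : Frame) : Prop :=
  ∃ f : P.W → Q.W, IsPMorphism P Q f ∧ Function.Surjective f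

/-- Order isomorphism of posets. -/
def FrameIso (P Q : Frame) : Prop :=
  ∃ f : P.W → Q.W, Function.Bijective f ∧ ∀ a b, P.le a b ↔ Q.le (f a) (f b)

/-- The logic of a class of posets. -/
def LogK (K : Set Frame) : Set Form := {φ | ∀ F ∈ K, F.Valid φ}

/-- The logic of a single poset. -/
def FrameLog (F : Frame) : Set Form := {φ | F.Valid φ}

/-- `J` is a Yankov formula for the finite rooted poset `Q`: a finite poset
refutes `J` exactly when `Q` is isomorphic to a rooted upset of one of its
p-morphic images. -/
def IsYankov (J : Form) (Q : Frame) : Prop :=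
  ∀ P : Frame, Finite P.W →
    (¬ P.Valid J ↔ ∃ G : Frame, PMorphicImage P G ∧ ∃ z : G.W, FrameIso (G.up z) Q)

/-! ## Rooted Kripke models over `n` propositional variables -/

structure Model (n : ℕ) : Type 1 where
  W : Type
  le : W → W → Prop
  refl : ∀ x, le x x
  trans : ∀ x y z, le x y → le y z → le x z
  antisymm : ∀ x y, le x y → le y x → x = y
  root : W
  rooted : ∀ w, le root w
  col : W → Set (Fin n)
  mono : ∀ a b, le a b → col a ⊆ col b

namespace Model

/-- The underlying poset of a model. -/
def frame {n : ℕ} (M : Model n) : Frame :=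
  ⟨M.W, M.le, M.refl, M.trans, M.antisymm⟩

def force {n : ℕ} (M : Model n) : Form → M.W → Prop
  | .var p, w => ∃ h : p < n, (⟨p, h⟩ : Fin n) ∈ M.col w
  | .bot, _ => False
  | .top, _ => True
  | .and φ ψ, w => M.force φ w ∧ M.force ψ w
  | .or φ ψ, w => M.force φ w ∨ M.force ψ w
  | .imp φ ψ, w => ∀ v, M.le w v → M.force φ v → M.force ψ v

/-- Satisfaction at the root of the model. -/
def Sat {n : ℕ} (M : Model n) (φ : Form) : Prop := M.force φ M.root

/-- (Full) bisimilarity of two rooted models. -/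
def Bisim {n : ℕ} (M N : Model n) : Prop :=
  ∃ S : M.W → N.W → Prop,
    S M.root N.root ∧
    (∀ a b, S a b → M.col a = N.col b) ∧
    (∀ a b a', S a b → M.le a a' → ∃ b', N.le b b' ∧ S a' b') ∧
    (∀ a b b', S a b → N.le b b' → ∃ a', M.le a a' ∧ S a' b')

/-- `k`-bisimilarity of the points `x, y`, via a decreasing chain
`S k ⊆ ⋯ ⊆ S 0` of relations. -/
def NBisimAt {n : ℕ} (M N : Model n) (k : ℕ) (x : M.W) (y : N.W) : Prop :=
  ∃ S : ℕ → M.W → N.W → Prop,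
    (∀ j a b, S (j + 1) a b → S j a b) ∧
    S k x y ∧
    (∀ a b, S 0 a b → M.col a = N.col b) ∧
    (∀ j a b a', j < k → S (j + 1) a b → M.le a a' →
        ∃ b', N.le b b' ∧ S j a' b') ∧
    (∀ j a b b', j < k → S (j + 1) a b → N.le b b' →
        ∃ a', M.le a a' ∧ S j a' b')

/-- `k`-bisimilarity of two rooted models. -/
def NBisim {n : ℕ} (M N : Model n) (k : ℕ) : Prop :=
  NBisimAt M N k M.root N.root

/-- The submodel on the rooted upset `↑z`. -/
def up {n : ℕ} (M : Model n) (z : M.W) : Model n where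
  W := {w : M.W // M.le z w}
  le a b := M.le a.1 b.1
  refl a := M.refl a.1
  trans a b c h1 h2 := M.trans a.1 b.1 c.1 h1 h2
  antisymm a b h1 h2 := Subtype.ext (M.antisymm a.1 b.1 h1 h2)
  root := ⟨z, M.refl z⟩
  rooted w := w.2
  col a := M.col a.1
  mono a b h := M.mono a.1 b.1 h

/-- `(M, x) ≤ₖ (N, y)`: there is `z ≥ x` such that `(↑z, z)` is `k`-bisimilar
with `(N, y)`. -/
def LeBisim {n : ℕ} (M N : Model n) (k : ℕ) : Prop :=
  ∃ z : M.W, M.le M.root z ∧ NBisim (M.up z) N k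

/-- Two points of a model are bisimilar. -/
def PointsBisim {n : ℕ} (M : Model n) (a b : M.W) : Prop :=
  ∃ S : M.W → M.W → Prop,
    S a b ∧
    (∀ x y, S x y → M.col x = M.col y) ∧
    (∀ x y x', S x y → M.le x x' → ∃ y', M.le y y' ∧ S x' y') ∧
    (∀ x y y', S x y → M.le y y' → ∃ x', M.le x x' ∧ S x' y')

/-- A model over `n` variables is (`n`-)generated if it contains no two
distinct bisimilar points. -/
def Generated {n : ℕ} (M : Model n) : Prop :=
  ∀ a b : M.W, M.PointsBisim a b → a = b

/-- Isomorphism of models: a root-preserving, color-preserving order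
isomorphism. -/
def Iso {n : ℕ} (M N : Model n) : Prop :=
  ∃ f : M.W → N.W, Function.Bijective f ∧ f M.root = N.root ∧
    (∀ a b, M.le a b ↔ N.le (f a) (f b)) ∧ (∀ a, N.col (f a) = M.col a)

/-- `M` is a model over the class of posets `K`: its underlying poset is a
p-morphic image of a rooted upset of a member of `K`. -/
def InClass {n : ℕ} (K : Set Frame) (M : Model n) : Prop :=
  ∃ F ∈ K, ∃ z : F.W, PMorphicImage (F.up z) M.frame

/-- The model on the rooted upset `↑z` of a frame `F`, with coloring `c`. -/
def ofFrame (F : Frame) (z : F.W) (n : ℕ) (c : (F.up z).W → Set (Fin n))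
    (hc : ∀ a b : (F.up z).W, (F.up z).le a b → c a ⊆ c b) : Model n where
  W := (F.up z).W
  le := (F.up z).le
  refl := (F.up z).refl
  trans := (F.up z).trans
  antisymm := (F.up z).antisymm
  root := ⟨z, F.refl z⟩
  rooted w := w.2
  col := c
  mono := hc

end Model

/-! ## Boolean sums and stacks -/

/-- A (finite rooted) poset is a Boolean sum: it is rooted, covers decrease the
depth by exactly one, and every point of depth `k+1` lies below every point of
depth `k`. -/
def IsBooleanSum (F : Frame) : Prop :=
  F.Rooted ∧
  (∀ a b da db, F.covBy a b → F.depthEq a da → F.depthEq b db → da = db + 1) ∧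
  (∀ a b k, F.depthEq a (k + 1) → F.depthEq b k → F.le a b)

/-- `F` contains a `k`-stack: `k` consecutive layers (sets of points of equal
depth) each containing at least two points. -/
def HasStack (F : Frame) (k : ℕ) : Prop :=
  ∃ j : ℕ, ∀ i : ℕ, j ≤ i → i < j + k →
    ∃ a b : F.W, a ≠ b ∧ F.depthEq a i ∧ F.depthEq b i

/-! ## The posets Q₁, …, Q₈ -/

def q1le : Fin 4 → Fin 4 → Bool := fun a b =>
  a = b || a = 0 || (a = 1 && b = 3)
def q2le : Fin 5 → Fin 5 → Bool := fun a b =>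
  a = b || a = 0 || (a = 1 && (b = 3 || b = 4)) || (a = 2 && b = 4)
def q3le : Fin 5 → Fin 5 → Bool := fun a b =>
  a = b || a = 0 || (a = 1 && b = 4) || (a = 2 && (b = 3 || b = 4)) ||
    (a = 3 && b = 4)
def q4le : Fin 5 → Fin 5 → Bool := fun a b =>
  a = b || a = 0 || ((a = 1 || a = 2) && (b = 3 || b = 4))
def q5le : Fin 6 → Fin 6 → Bool := fun a b =>
  a = b || a = 0 || b = 5 || ((a = 1 || a = 2) && (b = 3 || b = 4))
def q6le : Fin 4 → Fin 4 → Bool := fun a b =>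
  a = b || a = 0 || b = 3
def q7le : Fin 5 → Fin 5 → Bool := fun a b =>
  a = b || a = 0 || (a = 1 && b = 3) || (a = 2 && b = 4)
def q8le : Fin 4 → Fin 4 → Bool := fun a b =>
  a = b || a = 0

/-- `Q₁`: root `0`; immediate successors `1`, `2`; `2` maximal; `3` the unique
(maximal) immediate successor of `1`. -/
def Q1f : Frame :=
  ⟨Fin 4, fun a b => q1le a b = true, by decide, by decide, by decide⟩
/-- `Q₂`: root `0`; immediate successors `1`, `2`; maximal points `3`, `4`;
`1 < 3`, `1 < 4`, `2 < 4`, `2 ≮ 3`. -/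
def Q2f : Frame :=
  ⟨Fin 5, fun a b => q2le a b = true, by decide, by decide, by decide⟩
/-- `Q₃`: root `0`; immediate successors `1`, `2`; `3` covers `2`; top `4`
with `1 < 4` and `3 < 4`. -/
def Q3f : Frame :=
  ⟨Fin 5, fun a b => q3le a b = true, by decide, by decide, by decide⟩
/-- `Q₄`: root `0`; `1`, `2` cover the root; maximal `3`, `4` above both `1`
and `2`. -/
def Q4f : Frame :=
  ⟨Fin 5, fun a b => q4le a b = true, by decide, by decide, by decide⟩
/-- `Q₅`: `Q₄` with a greatest element `5` added on top. -/
def Q5f : Frame :=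
  ⟨Fin 6, fun a b => q5le a b = true, by decide, by decide, by decide⟩
/-- `Q₆`: the diamond. -/
def Q6f : Frame :=
  ⟨Fin 4, fun a b => q6le a b = true, by decide, by decide, by decide⟩
/-- `Q₇`: root `0`; `1 < 3`, `2 < 4`, and no other strict relations above the
root. -/
def Q7f : Frame :=
  ⟨Fin 5, fun a b => q7le a b = true, by decide, by decide, by decide⟩
/-- `Q₈`: a root with three pairwise incomparable maximal points. -/
def Q8f : Frame :=
  ⟨Fin 4, fun a b => q8le a b = true, by decide, by decide, by decide⟩

/-! ## Particular logics -/

/-- The one-element poset. -/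
def unitFrame : Frame :=
  ⟨PUnit, fun _ _ => True, fun _ => trivial, fun _ _ _ _ _ => trivial,
    fun a b _ _ => Subsingleton.elim a b⟩

/-- The two-element chain. -/
def chain2 : Frame :=
  ⟨Bool, fun a b => a ≤ b, le_refl, fun _ _ _ => le_trans,
    fun _ _ => le_antisymm⟩

/-- Classical propositional logic: the logic of the one-element poset. -/
def CPC : Set Form := FrameLog unitFrame

/-- The logic of the two-element chain. -/
def Sme : Set Form := FrameLog chain2

/-- The weak Peirce law `(q → p) ∨ (((p → q) → p) → p)`. -/
def wPLax : Form :=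
  .or (.imp (.var 1) (.var 0))
    (.imp (.imp (.imp (.var 0) (.var 1)) (.var 0)) (.var 0))

/-- The logic `wPL = IPC ⊕ (q → p) ∨ (((p → q) → p) → p)`. -/
def wPL : Set Form := oplus IPCSet {wPLax}

/-- The bounded-width-2 axiom `⋁_{i≤2} (pᵢ → ⋁_{j≠i} pⱼ)`. -/
def bw2ax : Form :=
  .or (.imp (.var 0) (.or (.var 1) (.var 2)))
    (.or (.imp (.var 1) (.or (.var 0) (.var 2)))
      (.imp (.var 2) (.or (.var 0) (.var 1))))

/-- The axiom `¬p ∨ ¬¬p`. -/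
def kcax : Form := .or (Form.neg (.var 0)) (Form.neg (Form.neg (.var 0)))

/-- The logic `Box = wPL ⊕ bw₂ ⊕ (¬p ∨ ¬¬p)`. -/
def BoxLogic : Set Form := oplus wPL {bw2ax, kcax}

/-- The bounded-depth formulas. -/
def bd : ℕ → Form
  | 0 => .var 0
  | n + 1 => .or (.var (n + 1)) (.imp (.var (n + 1)) (bd n))

/-- The logic `BD_n = IPC ⊕ bd_n`. -/
def BD (n : ℕ) : Set Form := oplus IPCSet {bd n}

/-- A logic is of finite depth if it contains some `BD_n`. -/
def FiniteDepth (L : Set Form) : Prop := ∃ n, BD n ⊆ L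

/-! ## The Rieger–Nishimura ladder -/

/-- Points of the Rieger–Nishimura ladder: `inl k = L_k`, `inr k = R_k`. -/
abbrev RNpt : Type := ℕ ⊕ ℕ

/-- The covering relation of the Rieger–Nishimura ladder (`rnCov a b` means
`a ⋖ b`, i.e. `b` is an immediate successor of `a`). -/
inductive rnCov : RNpt → RNpt → Prop
  | ll (k : ℕ) : rnCov (.inl (k + 1)) (.inl k)
  | rr (k : ℕ) : rnCov (.inr (k + 1)) (.inr k)
  | rl (k : ℕ) : rnCov (.inr (k + 1)) (.inl k)
  | lr (k : ℕ) : rnCov (.inl (k + 2)) (.inr k)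

private def rnIdx : RNpt → ℕ
  | .inl k => 2 * k
  | .inr k => 2 * k + 1

private theorem rnCov_idx {a b : RNpt} (h : rnCov a b) : rnIdx b < rnIdx a := by
  cases h <;> simp [rnIdx] <;> omega

private theorem rnLe_idx {a b : RNpt} (h : Relation.ReflTransGen rnCov a b) :
    rnIdx b ≤ rnIdx a := by
  induction h with
  | refl => exact le_rfl
  | tail _ h₂ ih => exact le_trans (le_of_lt (rnCov_idx h₂)) ih

private theorem rnIdx_inj {a b : RNpt} (h : rnIdx a = rnIdx b) : a = b := by
  rcases a with a | a <;> rcases b with b | b <;> simp [rnIdx] at h ⊢ <;> omega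

/-- The Rieger–Nishimura ladder as a poset: the order is the reflexive
transitive closure of the covering relation. -/
def RN : Frame where
  W := RNpt
  le a b := Relation.ReflTransGen rnCov a b
  refl _ := Relation.ReflTransGen.refl
  trans _ _ _ h1 h2 := h1.trans h2
  antisymm _ _ h1 h2 := rnIdx_inj (le_antisymm (rnLe_idx h2) (rnLe_idx h1))

/-! ## Combs -/

def combLe (n : ℕ) : (Fin n ⊕ Fin n) → (Fin n ⊕ Fin n) → Prop
  | .inl i, .inl j => i ≤ j
  | .inl i, .inr j => i ≤ j
  | .inr i, .inr j => i = j
  | .inr _, .inl _ => False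

/-- The `n`-comb: base points `x_1 ≤ … ≤ x_n` (encoded `inl 0, …, inl (n-1)`)
and maximal teeth `y_1, …, y_n` (encoded `inr 0, …, inr (n-1)`), with
`x_i ≤ y_j ↔ i ≤ j` and the teeth pairwise incomparable. -/
def Comb (n : ℕ) : Frame where
  W := Fin n ⊕ Fin n
  le := combLe n
  refl := by rintro (i | i) <;> simp [combLe]
  trans := by
    rintro (i | i) (j | j) (k | k) h1 h2 <;> simp only [combLe] at * <;>
      first
        | exact le_trans h1 h2
        | exact h2 ▸ h1
  antisymm := by
    rintro (i | i) (j | j) h1 h2 <;> simp only [combLe] at * <;>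
      first
        | exact congrArg Sum.inl (le_antisymm h1 h2)
        | exact congrArg Sum.inr h1

/-- A broken `m`-comb: (isomorphic to) a subposet of the `m`-comb containing
all of the base points `x_1, …, x_m`. -/
def IsBrokenComb (F : Frame) (m : ℕ) : Prop :=
  ∃ s : Set (Comb m).W, (∀ i : Fin m, Sum.inl i ∈ s) ∧
    FrameIso F ((Comb m).restrict s)

/-- The logic of the class of all combs. -/
def LFC : Set Form := LogK {F | ∃ n, F = Comb n}

/-! ## The stacked models `M_n^k` and `N_n^k` -/

/-- Height index of a point: layer `j` (from the top) has index `j`, the root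
(`none`) has index `k+1`. -/
def stackIdx (k : ℕ) : Option (Fin (k + 1) × Bool) → ℕ
  | none => k + 1
  | some (j, _) => j

/-- Size of the color (an initial segment of the variables): the left point
(`false`) of layer `j` gets `1^{n-j}0^j`, the right point (`true`) gets
`1^{n-j-1}0^{j+1}`, and the root gets `1^r0^{n-r}`. -/
def stackColSize (n k r : ℕ) : Option (Fin (k + 1) × Bool) → ℕ
  | none => r
  | some (j, false) => n - j
  | some (j, true) => n - ((j : ℕ) + 1)

private theorem stackColSize_le (n k r : ℕ) (hr : r ≤ n - (k + 1))
    {a b : Option (Fin (k + 1) × Bool)} (h : stackIdx k b < stackIdx k a) :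
    stackColSize n k r a ≤ stackColSize n k r b := by
  rcases a with _ | ⟨j, _ | _⟩ <;> rcases b with _ | ⟨j', _ | _⟩ <;>
    simp only [stackIdx, stackColSize] at * <;> omega

/-- The common shape of `M_n^k` and `N_n^k`, with root color `1^r0^{n-r}`:
`k+1` layers of two points stacked on top of a root. -/
def stackModel (n k r : ℕ) (hr : r ≤ n - (k + 1)) : Model n where
  W := Option (Fin (k + 1) × Bool)
  le a b := a = b ∨ stackIdx k b < stackIdx k a
  refl _ := Or.inl rfl
  trans := by
    rintro a b c (rfl | h1) h2
    · exact h2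
    · rcases h2 with rfl | h2
      · exact Or.inr h1
      · exact Or.inr (h2.trans h1)
  antisymm := by
    rintro a b (rfl | h1) h2
    · rfl
    · rcases h2 with rfl | h2
      · rfl
      · omega
  root := none
  rooted := by
    rintro (_ | ⟨j, s⟩)
    · exact Or.inl rfl
    · exact Or.inr j.isLt
  col a := {i : Fin n | (i : ℕ) < stackColSize n k r a}
  mono := by
    rintro a b (rfl | h) i hi
    · exact hi
    · exact lt_of_lt_of_le hi (stackColSize_le n k r hr h)

/-- The model `M_n^k` (root color `1^{n-k-1}0^{k+1}`). -/
def Mmodel (n k : ℕ) : Model n := stackModel n k (n - (k + 1)) le_rfl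

/-- The model `N_n^k` (root color `1^{n-k-2}0^{k+2}`). -/
def Nmodel (n k : ℕ) : Model n := stackModel n k (n - (k + 2)) (by omega)

/-! ## The frames `S_n` -/

/-- Height index in `S_n`: the top point (`some none`) has index `0`, the two
points of the `j`-th middle layer have index `j+1`, and the root (`none`) has
index `n`. -/
def sIdx (n : ℕ) : Option (Option (Fin (n - 1) × Bool)) → ℕ
  | none => n
  | some none => 0
  | some (some (j, _)) => (j : ℕ) + 1

/-- The frame `S_n` (for `n ≥ 2`): the Boolean sum whose layers from top to
bottom have sizes `1, 2, …, 2, 1` (with `n - 1` layers of size `2`). -/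
def SFrame (n : ℕ) : Frame where
  W := Option (Option (Fin (n - 1) × Bool))
  le a b := a = b ∨ sIdx n b < sIdx n a
  refl _ := Or.inl rfl
  trans := by
    rintro a b c (rfl | h1) h2
    · exact h2
    · rcases h2 with rfl | h2
      · exact Or.inr h1
      · exact Or.inr (h2.trans h1)
  antisymm := by
    rintro a b (rfl | h1) h2
    · rfl
    · rcases h2 with rfl | h2
      · rfl
      · omega

private lemma pmorphic_of_iso (P F G : Frame) (hiso : FrameIso F G)
    (h : PMorphicImage P G) : PMorphicImage P F := by
  obtain ⟨g, hgbij, hgiff⟩ := hiso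
  obtain ⟨φ, ⟨hmono, hback⟩, hsurj⟩ := h
  let e := Equiv.ofBijective g hgbij
  have hge : ∀ x, g (e.symm x) = x := fun x => Equiv.ofBijective_apply_symm_apply g hgbij x
  refine ⟨fun a => e.symm (φ a), ⟨?_, ?_⟩, ?_⟩
  · intro a b hab
    rw [hgiff, hge, hge]
    exact hmono a b hab
  · intro a b hab
    rw [hgiff, hge] at hab
    obtain ⟨a', ha'le, ha'eq⟩ := hback a (g b) hab
    refine ⟨a', ha'le, ?_⟩
    show e.symm (φ a') = b
    rw [ha'eq]
    exact e.symm_apply_apply b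
  · intro y
    obtain ⟨x, hx⟩ := hsurj (g y)
    exact ⟨x, by show e.symm (φ x) = y; rw [hx]; exact e.symm_apply_apply y⟩

private lemma comb_onto_broken (F : Frame) (m : ℕ) (h : IsBrokenComb F m) :
    PMorphicImage (Comb m) F := by
  classical
  obtain ⟨s, hs, hiso⟩ := h
  apply pmorphic_of_iso _ _ _ hiso
  rcases Nat.eq_zero_or_pos m with rfl | hm
  · exact ⟨fun a => a.elim (fun i => i.elim0) (fun i => i.elim0),
      ⟨by rintro (i | i) <;> exact i.elim0, by rintro (i | i) <;> exact i.elim0⟩,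
      by rintro ⟨(i | i), _⟩ <;> exact i.elim0⟩
  set t : Fin m := ⟨m - 1, by omega⟩ with ht
  have htop : ∀ j : Fin m, j ≤ t := fun j => by
    have := j.isLt; simp only [Fin.le_def, ht]; omega
  set φ : (Comb m).W → ((Comb m).restrict s).W := fun a =>
    match a with
    | .inl i => ⟨.inl i, hs i⟩
    | .inr i =>
        if h1 : Sum.inr i ∈ s then ⟨.inr i, h1⟩
        else if h2 : Sum.inr t ∈ s then ⟨.inr t, h2⟩ else ⟨.inl t, hs t⟩
    with hφ
  have hφval : ∀ i : Fin m, (φ (Sum.inr i)).1 = Sum.inr i ∨ (φ (Sum.inr i)).1 = Sum.inr t ∨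
      ((φ (Sum.inr i)).1 = Sum.inl t ∧ Sum.inr t ∉ s) := by
    intro i
    simp only [hφ]
    by_cases h1 : Sum.inr i ∈ s
    · exact Or.inl (congrArg Subtype.val (dif_pos h1))
    · by_cases h2 : Sum.inr t ∈ s
      · exact Or.inr (Or.inl ((congrArg Subtype.val (dif_neg h1)).trans (congrArg Subtype.val (dif_pos h2))))
      · exact Or.inr (Or.inr ⟨(congrArg Subtype.val (dif_neg h1)).trans (congrArg Subtype.val (dif_neg h2)), h2⟩)
  refine ⟨φ, ⟨?_, ?_⟩, ?_⟩
  · -- monotone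
    rintro (i | i) (j | j) hab
    · exact (hab : i ≤ j)
    · show combLe m (Sum.inl i) (φ (Sum.inr j)).1
      have hab' : i ≤ j := hab
      rcases hφval j with hv | hv | ⟨hv, _⟩ <;> rw [hv]
      · exact hab'
      · exact le_trans hab' (htop j)
      · exact le_trans hab' (htop j)
    · exact (hab : False).elim
    · have : i = j := hab
      subst this
      exact ((Comb m).restrict s).refl _
  · -- back condition
    rintro (i | i) b hab
    · have hab' : combLe m (Sum.inl i) b.1 := hab
      rcases b with ⟨(j | j), hb⟩
      · exact ⟨Sum.inl j, (hab' : i ≤ j), rfl⟩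
      · exact ⟨Sum.inr j, (hab' : i ≤ j), by simp only [hφ]; exact dif_pos hb⟩
    · -- φ (inr i) is maximal
      refine ⟨Sum.inr i, (Comb m).refl _, ?_⟩
      apply Subtype.ext
      have hab' : combLe m (φ (Sum.inr i)).1 b.1 := hab
      rcases b with ⟨(j | j), hb⟩
      · rcases hφval i with hv | hv | ⟨hv, hts⟩ <;> rw [hv] at hab' ⊢
        · exact (hab' : False).elim
        · exact (hab' : False).elim
        · exact congrArg Sum.inl (le_antisymm (hab' : t ≤ j) (htop j))
      · rcases hφval i with hv | hv | ⟨hv, hts⟩ <;> rw [hv] at hab' ⊢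
        · exact congrArg Sum.inr (hab' : i = j)
        · exact congrArg Sum.inr (hab' : t = j)
        · exact absurd hb (by rw [le_antisymm (hab' : t ≤ j) (htop j)] at hts; exact hts)
  · rintro ⟨(j | j), hb⟩
    · exact ⟨Sum.inl j, rfl⟩
    · exact ⟨Sum.inr j, by simp only [hφ]; exact dif_pos hb⟩

private lemma broken_of_comb (F : Frame) (n : ℕ) (h : PMorphicImage (Comb n) F) :
    ∃ m, IsBrokenComb F m := by
  classical
  obtain ⟨f, ⟨hmono, hback⟩, hsurj⟩ := h
  rcases Nat.eq_zero_or_pos n with rfl | hn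
  · have he : IsEmpty F.W := ⟨fun w => by
      obtain ⟨a, -⟩ := hsurj w
      rcases a with i | i <;> exact i.elim0⟩
    exact ⟨0, ∅, fun i => i.elim0, fun w => (he.false w).elim,
      ⟨fun a => (he.false a).elim, fun b => (Set.notMem_empty _ b.2).elim⟩,
      fun a => (he.false a).elim⟩
  set B : Finset F.W := Finset.image (fun i : Fin n => f (Sum.inl i)) Finset.univ with hB
  set k := B.card with hk
  set ν : F.W → ℕ := fun w => (B.filter (fun b => F.le b w)).card with hν
  have hmemB : ∀ i : Fin n, f (Sum.inl i) ∈ B := fun i =>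
    Finset.mem_image.mpr ⟨i, Finset.mem_univ i, rfl⟩
  have hmin : ∀ w, F.le (f (Sum.inl ⟨0, hn⟩)) w := by
    intro w
    obtain ⟨a, rfl⟩ := hsurj w
    apply hmono
    rcases a with i | i
    · show (⟨0, hn⟩ : Fin n) ≤ i
      rw [Fin.le_def]; exact Nat.zero_le _
    · show (⟨0, hn⟩ : Fin n) ≤ i
      rw [Fin.le_def]; exact Nat.zero_le _
  have hν1 : ∀ w, 1 ≤ ν w := by
    intro w
    exact Finset.card_pos.mpr ⟨_, Finset.mem_filter.mpr ⟨hmemB ⟨0, hn⟩, hmin w⟩⟩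
  have hνk : ∀ w, ν w ≤ k := fun w => Finset.card_le_card (Finset.filter_subset _ _)
  have hchain : ∀ b ∈ B, ∀ b' ∈ B, F.le b b' ∨ F.le b' b := by
    intro b hb b' hb'
    obtain ⟨i, -, rfl⟩ := Finset.mem_image.mp hb
    obtain ⟨j, -, rfl⟩ := Finset.mem_image.mp hb'
    rcases le_total i j with hij | hij
    · exact Or.inl (hmono (Sum.inl i) (Sum.inl j) hij)
    · exact Or.inr (hmono (Sum.inl j) (Sum.inl i) hij)
  have hkey : ∀ b ∈ B, ∀ w, F.le b w ↔ ν b ≤ ν w := by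
    intro b hb w
    constructor
    · intro hle
      apply Finset.card_le_card
      intro c hc
      obtain ⟨hcB, hcb⟩ := Finset.mem_filter.mp hc
      exact Finset.mem_filter.mpr ⟨hcB, F.trans _ _ _ hcb hle⟩
    · intro hle
      by_contra hnle
      have hsub : B.filter (fun c => F.le c w) ⊆ B.filter (fun c => F.le c b) := by
        intro c hc
        obtain ⟨hcB, hcw⟩ := Finset.mem_filter.mp hc
        rcases hchain c hcB b hb with h1 | h1
        · exact Finset.mem_filter.mpr ⟨hcB, h1⟩
        · exact absurd (F.trans _ _ _ h1 hcw) hnle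
      have hlt : ν w < ν b := Finset.card_lt_card
        ((Finset.ssubset_iff_of_subset hsub).mpr ⟨b, Finset.mem_filter.mpr ⟨hb, F.refl b⟩,
          fun hmem => hnle (Finset.mem_filter.mp hmem).2⟩)
      omega
  have hmax : ∀ w, w ∉ B → ∀ v, F.le w v → v = w := by
    intro w hw v hv
    obtain ⟨a, rfl⟩ := hsurj w
    rcases a with i | i
    · exact absurd (hmemB i) hw
    · obtain ⟨a', ha'le, rfl⟩ := hback (Sum.inr i) v hv
      rcases a' with j | j
      · exact (ha'le : False).elim
      · have hij : i = j := ha'le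
        subst hij
        rfl
  have hsurjB : ∀ v, 1 ≤ v → v ≤ k → ∃ b ∈ B, ν b = v := by
    intro v hv1 hvk
    have hcard : (Finset.univ : Finset (Fin k)).card ≤ B.card := by
      rw [Finset.card_univ, Fintype.card_fin]
    have hs := Finset.surj_on_of_inj_on_of_card_le
      (f := fun (b : F.W) (_ : b ∈ B) =>
        (⟨ν b - 1, by have := hν1 b; have := hνk b; omega⟩ : Fin k))
      (fun b hb => Finset.mem_univ _)
      (fun b1 b2 hb1 hb2 heq => by
        have hval : ν b1 - 1 = ν b2 - 1 := congrArg Fin.val heq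
        have h1 := hν1 b1; have h2 := hν1 b2
        have hee : ν b1 = ν b2 := by omega
        exact F.antisymm _ _ ((hkey b1 hb1 b2).mpr (le_of_eq hee))
          ((hkey b2 hb2 b1).mpr (le_of_eq hee.symm)))
      hcard
    obtain ⟨b, hb, hbeq⟩ := hs ⟨v - 1, by omega⟩ (Finset.mem_univ _)
    refine ⟨b, hb, ?_⟩
    have h1 := hν1 b
    have h2 : v - 1 = ν b - 1 := congrArg Fin.val hbeq
    omega
  have htooth : ∀ t, t ∉ B → ∀ t', t' ∉ B → ν t = ν t' → t = t' := by
    intro t ht t' ht' hνe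
    by_contra hne
    obtain ⟨b, hbB, hbν⟩ := hsurjB (ν t) (hν1 t) (hνk t)
    have hbt : F.le b t := (hkey b hbB t).mpr (le_of_eq hbν)
    have hbt' : F.le b t' := (hkey b hbB t').mpr (by rw [hbν, hνe])
    set I : Finset (Fin n) := Finset.univ.filter (fun i => f (Sum.inl i) = b) with hI
    have hIne : I.Nonempty := by
      obtain ⟨i, -, hieq⟩ := Finset.mem_image.mp hbB
      exact ⟨i, Finset.mem_filter.mpr ⟨Finset.mem_univ _, hieq⟩⟩
    set i0 := I.max' hIne with hi0def
    have hi0 : f (Sum.inl i0) = b := (Finset.mem_filter.mp (I.max'_mem hIne)).2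
    have hgt : ∀ i : Fin n, i0 < i → f (Sum.inl i) ≠ b := by
      intro i hlt heq
      exact absurd (Finset.le_max' I i (Finset.mem_filter.mpr ⟨Finset.mem_univ _, heq⟩))
        (not_le.mpr hlt)
    have claimA : ∀ u, u ∉ B → ν u = ν t → ∀ i : Fin n, i0 < i → ¬ F.le (f (Sum.inl i)) u := by
      intro u hu hνu i hlt hle
      have hiB : f (Sum.inl i) ∈ B := hmemB i
      have h1 : ν (f (Sum.inl i)) ≤ ν u := (hkey _ hiB u).mp hle
      have h2 : F.le b (f (Sum.inl i)) := by
        rw [← hi0]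
        exact hmono (Sum.inl i0) (Sum.inl i) (le_of_lt hlt)
      have h3 : ν b ≤ ν (f (Sum.inl i)) := (hkey b hbB _).mp h2
      have h4 : F.le (f (Sum.inl i)) b := (hkey _ hiB b).mpr (by omega)
      exact hgt i hlt (F.antisymm _ _ h4 h2)
    have hwit : ∀ u, u ∉ B → F.le b u → ∃ a : Fin n, i0 ≤ a ∧ f (Sum.inr a) = u := by
      intro u hu hbu
      obtain ⟨a', ha'le, ha'eq⟩ := hback (Sum.inl i0) u (by rw [hi0]; exact hbu)
      rcases a' with l | l
      · exact absurd (ha'eq ▸ hmemB l) hu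
      · exact ⟨l, (ha'le : i0 ≤ l), ha'eq⟩
    obtain ⟨a, hai, hat⟩ := hwit t ht hbt
    obtain ⟨c, hci, hct⟩ := hwit t' ht' hbt'
    have hac : a ≠ c := by
      intro hh
      subst hh
      exact hne (by rw [← hat, ← hct])
    rcases lt_or_gt_of_ne hac with hlt | hlt
    · refine claimA t' ht' hνe.symm c (lt_of_le_of_lt hai hlt) ?_
      rw [← hct]
      exact hmono (Sum.inl c) (Sum.inr c) (le_refl c)
    · refine claimA t ht rfl a (lt_of_le_of_lt hci hlt) ?_
      rw [← hat]
      exact hmono (Sum.inl a) (Sum.inr a) (le_refl a)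
  have hbound : ∀ w, ν w - 1 < k := fun w => by have := hν1 w; have := hνk w; omega
  set Ψ : F.W → (Comb k).W := fun w =>
    if w ∈ B then Sum.inl ⟨ν w - 1, hbound w⟩ else Sum.inr ⟨ν w - 1, hbound w⟩ with hΨ
  have hΨin : ∀ w (hw : w ∈ B), Ψ w = Sum.inl ⟨ν w - 1, hbound w⟩ := fun w hw => if_pos hw
  have hΨout : ∀ w (hw : w ∉ B), Ψ w = Sum.inr ⟨ν w - 1, hbound w⟩ := fun w hw => if_neg hw
  refine ⟨k, Set.range Ψ, ?_, fun w => ⟨Ψ w, Set.mem_range_self w⟩, ⟨?_, ?_⟩, ?_⟩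
  · intro i
    obtain ⟨b, hbB, hbν⟩ := hsurjB ((i : ℕ) + 1) (by omega) i.isLt
    exact ⟨b, by rw [hΨin b hbB]; exact congrArg Sum.inl (Fin.ext (by simp [hbν]))⟩
  · -- injectivity
    intro w w' heq
    have heq' : @Eq (Fin k ⊕ Fin k) (Ψ w) (Ψ w') := congrArg Subtype.val heq
    have h1 := hν1 w; have h2 := hν1 w'
    by_cases hw : w ∈ B <;> by_cases hw' : w' ∈ B
    · rw [hΨin w hw, hΨin w' hw'] at heq'
      simp only [Sum.inl.injEq, Fin.mk.injEq] at heq'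
      have hee : ν w = ν w' := by omega
      exact F.antisymm _ _ ((hkey w hw w').mpr (le_of_eq hee))
        ((hkey w' hw' w).mpr (le_of_eq hee.symm))
    · rw [hΨin w hw, hΨout w' hw'] at heq'
      exact absurd heq' (by simp)
    · rw [hΨout w hw, hΨin w' hw'] at heq'
      exact absurd heq' (by simp)
    · rw [hΨout w hw, hΨout w' hw'] at heq'
      simp only [Sum.inr.injEq, Fin.mk.injEq] at heq'
      exact htooth w hw w' hw' (by omega)
  · -- surjectivity
    rintro ⟨c, hc⟩
    obtain ⟨w, rfl⟩ := hc
    exact ⟨w, rfl⟩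
  · -- order iso
    intro w w'
    show F.le w w' ↔ combLe k (Ψ w) (Ψ w')
    have h1 := hν1 w; have h2 := hν1 w'
    by_cases hw : w ∈ B <;> by_cases hw' : w' ∈ B
    · rw [hΨin w hw, hΨin w' hw', hkey w hw w']
      simp only [combLe, Fin.mk_le_mk]
      omega
    · rw [hΨin w hw, hΨout w' hw', hkey w hw w']
      simp only [combLe, Fin.mk_le_mk]
      omega
    · rw [hΨout w hw, hΨin w' hw']
      simp only [combLe, iff_false]
      intro hle
      exact hw (hmax w hw w' hle ▸ hw')
    · rw [hΨout w hw, hΨout w' hw']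
      simp only [combLe, Fin.mk.injEq]
      constructor
      · intro hle
        have hee : w' = w := hmax w hw w' hle
        subst hee
        rfl
      · intro hle
        have hee : w = w' := htooth w hw w' hw' (by omega)
        rw [hee]
        exact F.refl w'

/-- A finite poset is a p-morphic image of an `n`-comb for
some `n` iff it is a broken `m`-comb for some `m`. -/
theorem statement10 (F : Frame) (hF : Finite F.W) :
    (∃ n, PMorphicImage (Comb n) F) ↔ ∃ m, IsBrokenComb F m := by
  constructor
  · rintro ⟨n, h⟩
    exact broken_of_comb F n h
  · rintro ⟨m, h⟩
    exact ⟨m, comb_onto_broken F m h⟩
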